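/- In a global NPC space M, let β_1, β_2 ∈ 𝒞_p(M) and for t ∈ [0,1] define (β_1 #_t β_2)(μ) := β_1(μ) #_t β_2(μ). Then β_1 #_t β_2 ∈ 𝒞_p(M), and moreover d_p(β_1 #_t β_2, β_3 #_t β_4) ≤ (1−t) d_p(β_1,β_3) + t d_p(β_2,β_4) for the metric d_p on 𝒞_p(M); in particular t ↦ β_1 #_t β_2 is a minimal geodesic in (𝒞_p(M), d_p). -/

import Mathlib

open MeasureTheory ENNReal Filter Topology

noncomputable section

variable {Ω M : Type*}

/-- A coupling of two measures on `M`. -/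
def IsCoupling [MeasurableSpace M] (π : MeasureTheory.Measure (M × M))
    (μ ν : MeasureTheory.Measure M) : Prop :=
  π.map Prod.fst = μ ∧ π.map Prod.snd = ν

/-- The `p`-Wasserstein (extended) distance between two measures. -/
def wassDist [MeasurableSpace M] [PseudoEMetricSpace M] (p : ℝ)
    (μ ν : MeasureTheory.Measure M) : ℝ≥0∞ :=
  ⨅ (π : MeasureTheory.Measure (M × M)) (_ : IsCoupling π μ ν),
    (∫⁻ xy, edist xy.1 xy.2 ^ p ∂π) ^ (1 / p)

/-- Finite `p`-th moment. -/
def HasFinitePMoment [MeasurableSpace M] [PseudoEMetricSpace M] (p : ℝ)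
    (μ : MeasureTheory.Measure M) : Prop :=
  ∀ x : M, ∫⁻ y, edist x y ^ p ∂μ < ⊤

/-- `p`-th Bochner integrability of an `M`-valued function. -/
def PIntegrable {mΩ : MeasurableSpace Ω} [PseudoEMetricSpace M] (p : ℝ)
    (P : MeasureTheory.Measure Ω) (φ : Ω → M) : Prop :=
  MeasureTheory.AEStronglyMeasurable φ P ∧ ∀ x : M, ∫⁻ ω, edist x (φ ω) ^ p ∂P < ⊤

/-- A `p`-contractive barycentric map. -/
structure IsBarycentric [MeasurableSpace M] [PseudoEMetricSpace M] (p : ℝ)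
    (β : MeasureTheory.Measure M → M) : Prop where
  map_dirac : ∀ x : M, β (MeasureTheory.Measure.dirac x) = x
  contract : ∀ μ ν : MeasureTheory.Measure M, MeasureTheory.IsProbabilityMeasure μ →
    MeasureTheory.IsProbabilityMeasure ν → HasFinitePMoment p μ → HasFinitePMoment p ν →
    edist (β μ) (β ν) ≤ wassDist p μ ν

/-- Empirical measure `(1/n) ∑_{k<n} δ_{φ(T^k ω)}`. -/
def empMeas [MeasurableSpace M] (φ : Ω → M) (T : Ω → Ω) (n : ℕ) (ω : Ω) :
    MeasureTheory.Measure M :=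
  (n : ℝ≥0∞)⁻¹ • ∑ k ∈ Finset.range n, MeasureTheory.Measure.dirac (φ (T^[k] ω))

/-- Uniform measure on a finite tuple. -/
def unifMeas [MeasurableSpace M] {n : ℕ} (x : Fin n → M) : MeasureTheory.Measure M :=
  (n : ℝ≥0∞)⁻¹ • ∑ i, MeasureTheory.Measure.dirac (x i)

/-- The distance between two barycentric maps:
`sup { d(β₁(x), β₂(x)) / Δ(x) }` over finite tuples `x` of positive diameter. -/
def barDist [MetricSpace M] [MeasurableSpace M] (β₁ β₂ : MeasureTheory.Measure M → M) : ℝ :=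
  sSup {r : ℝ | ∃ n : ℕ, ∃ x : Fin (n + 1) → M, Metric.diam (Set.range x) ≠ 0 ∧
    r = dist (β₁ (unifMeas x)) (β₂ (unifMeas x)) / Metric.diam (Set.range x)}


open Pointwise in
private lemma real_sSup_image_mul (c : ℝ) (hc : 0 ≤ c) (S : Set ℝ) :
    sSup ((fun r => c * r) '' S) = c * sSup S := by
  have : (fun r => c * r) '' S = c • S := by
    ext r; simp [Set.mem_smul_set, smul_eq_mul]
  rw [this, Real.sSup_smul_of_nonneg hc, smul_eq_mul]

section BarHelpers
variable [MetricSpace M] [MeasurableSpace M] [BorelSpace M]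

omit [MetricSpace M] [BorelSpace M] in
private lemma measure_map_finset_sum {N : Type*} [MeasurableSpace N] {ι : Type*} (s : Finset ι)
    (μ : ι → MeasureTheory.Measure M) {f : M → N} (hf : Measurable f) :
    (∑ i ∈ s, μ i).map f = ∑ i ∈ s, (μ i).map f := by
  induction s using Finset.cons_induction with
  | empty => simp [Measure.map_zero]
  | cons a s ha ih => rw [Finset.sum_cons, Finset.sum_cons, Measure.map_add _ _ hf, ih]

omit [MetricSpace M] [BorelSpace M] in
private lemma unif_prob {n : ℕ} (x : Fin (n + 1) → M) : IsProbabilityMeasure (unifMeas x) := by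
  constructor
  simp only [unifMeas, Measure.smul_apply, Measure.coe_finset_sum, Finset.sum_apply,
    Measure.dirac_apply_of_mem (Set.mem_univ _), Finset.sum_const, Finset.card_univ,
    Fintype.card_fin, nsmul_eq_mul, mul_one, smul_eq_mul]
  rw [ENNReal.inv_mul_cancel] <;> simp

private lemma lintegral_unif {n : ℕ} (x : Fin (n + 1) → M) (f : M → ℝ≥0∞) :
    ∫⁻ z, f z ∂(unifMeas x) = (n + 1 : ℝ≥0∞)⁻¹ * ∑ i, f (x i) := by
  simp [unifMeas, lintegral_smul_measure, lintegral_finset_sum_measure, lintegral_dirac]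

private lemma unif_moment {n : ℕ} (p : ℝ) (hp : 0 ≤ p) (x : Fin (n + 1) → M) :
    HasFinitePMoment p (unifMeas x) := by
  intro z
  rw [lintegral_unif]
  refine ENNReal.mul_lt_top (by simp) ?_
  exact (ENNReal.sum_lt_top.2 fun i _ => ENNReal.rpow_lt_top_of_nonneg hp (edist_ne_top _ _))

private lemma dirac_moment (p : ℝ) (hp : 0 ≤ p) (z₀ : M) :
    HasFinitePMoment p (MeasureTheory.Measure.dirac z₀) := by
  intro z
  rw [lintegral_dirac]
  exact ENNReal.rpow_lt_top_of_nonneg hp (edist_ne_top _ _)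

private lemma wass_unif_dirac {n : ℕ} (p : ℝ) (hp : 1 ≤ p) (x : Fin (n + 1) → M) :
    wassDist p (unifMeas x) (Measure.dirac (x 0)) ≤ EMetric.diam (Set.range x) := by
  have hp0 : (0 : ℝ) < p := lt_of_lt_of_le one_pos hp
  set π : Measure (M × M) := (n + 1 : ℝ≥0∞)⁻¹ • ∑ i, Measure.dirac ((x i, x 0)) with hπ
  have hfst : π.map Prod.fst = unifMeas x := by
    rw [hπ, Measure.map_smul, measure_map_finset_sum _ _ measurable_fst, unifMeas]
    simp [Measure.map_dirac' measurable_fst]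
  have hsnd : π.map Prod.snd = Measure.dirac (x 0) := by
    rw [hπ, Measure.map_smul, measure_map_finset_sum _ _ measurable_snd]
    simp only [Measure.map_dirac' measurable_snd, Finset.sum_const, Finset.card_univ,
      Fintype.card_fin]
    rw [← Nat.cast_smul_eq_nsmul ℝ≥0∞, smul_smul]
    push_cast
    rw [ENNReal.inv_mul_cancel (by simp) (by simp), one_smul]
  have hcoup : IsCoupling π (unifMeas x) (Measure.dirac (x 0)) := ⟨hfst, hsnd⟩
  have hle : wassDist p (unifMeas x) (Measure.dirac (x 0)) ≤
      (∫⁻ xy, edist xy.1 xy.2 ^ p ∂π) ^ (1 / p) :=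
    iInf_le_of_le π (iInf_le_of_le hcoup le_rfl)
  have hint : ∫⁻ xy, edist xy.1 xy.2 ^ p ∂π ≤ EMetric.diam (Set.range x) ^ p := by
    rw [hπ, lintegral_smul_measure, lintegral_finset_sum_measure]
    simp only [lintegral_dirac]
    calc (n + 1 : ℝ≥0∞)⁻¹ * ∑ i : Fin (n + 1), edist (x i) (x 0) ^ p
        ≤ (n + 1 : ℝ≥0∞)⁻¹ * ∑ _i : Fin (n + 1), EMetric.diam (Set.range x) ^ p := by
          gcongr with i
          exact EMetric.edist_le_diam_of_mem (Set.mem_range_self _) (Set.mem_range_self _)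
      _ = EMetric.diam (Set.range x) ^ p := by
          rw [Finset.sum_const, Finset.card_univ, Fintype.card_fin, nsmul_eq_mul, ← mul_assoc]
          push_cast
          rw [ENNReal.inv_mul_cancel (by simp) (by simp), one_mul]
  calc wassDist p (unifMeas x) (Measure.dirac (x 0))
      ≤ (∫⁻ xy, edist xy.1 xy.2 ^ p ∂π) ^ (1 / p) := hle
    _ ≤ (EMetric.diam (Set.range x) ^ p) ^ (1 / p) :=
        ENNReal.rpow_le_rpow hint (by positivity)
    _ = EMetric.diam (Set.range x) := by
        rw [← ENNReal.rpow_mul, mul_one_div, div_self hp0.ne', ENNReal.rpow_one]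

private lemma bar_close {n : ℕ} (p : ℝ) (hp : 1 ≤ p) {β : MeasureTheory.Measure M → M}
    (hβ : IsBarycentric p β) (x : Fin (n + 1) → M) :
    edist (β (unifMeas x)) (x 0) ≤ EMetric.diam (Set.range x) := by
  have hp0 : (0 : ℝ) ≤ p := le_trans zero_le_one hp
  have h := hβ.contract (unifMeas x) (Measure.dirac (x 0)) (unif_prob x) inferInstance
    (unif_moment p hp0 x) (dirac_moment p hp0 _)
  rw [hβ.map_dirac] at h
  exact le_trans h (wass_unif_dirac p hp x)

private lemma bar_dist_le {n : ℕ} (p : ℝ) (hp : 1 ≤ p) {β β' : MeasureTheory.Measure M → M}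
    (hβ : IsBarycentric p β) (hβ' : IsBarycentric p β') (x : Fin (n + 1) → M) :
    dist (β (unifMeas x)) (β' (unifMeas x)) ≤ 2 * Metric.diam (Set.range x) := by
  have hne : EMetric.diam (Set.range x) ≠ ⊤ := (Set.finite_range x).isBounded.ediam_ne_top
  have key : ∀ γ : MeasureTheory.Measure M → M, IsBarycentric p γ →
      dist (γ (unifMeas x)) (x 0) ≤ Metric.diam (Set.range x) := by
    intro γ hγ
    rw [dist_edist, Metric.diam]
    exact ENNReal.toReal_mono hne (bar_close p hp hγ x)
  calc dist (β (unifMeas x)) (β' (unifMeas x))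
      ≤ dist (β (unifMeas x)) (x 0) + dist (x 0) (β' (unifMeas x)) := dist_triangle _ _ _
    _ ≤ Metric.diam (Set.range x) + Metric.diam (Set.range x) := by
        rw [dist_comm (x 0)]
        exact add_le_add (key β hβ) (key β' hβ')
    _ = 2 * Metric.diam (Set.range x) := by ring

private lemma barSet_bdd (p : ℝ) (hp : 1 ≤ p) {β β' : MeasureTheory.Measure M → M}
    (hβ : IsBarycentric p β) (hβ' : IsBarycentric p β') :
    BddAbove {r : ℝ | ∃ n : ℕ, ∃ x : Fin (n + 1) → M, Metric.diam (Set.range x) ≠ 0 ∧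
      r = dist (β (unifMeas x)) (β' (unifMeas x)) / Metric.diam (Set.range x)} := by
  refine ⟨2, fun r hr => ?_⟩
  obtain ⟨n, x, hΔ, rfl⟩ := hr
  have hΔpos : 0 < Metric.diam (Set.range x) := lt_of_le_of_ne Metric.diam_nonneg (Ne.symm hΔ)
  rw [div_le_iff₀ hΔpos]
  exact bar_dist_le p hp hβ hβ' x

private lemma barDist_nonneg (β β' : MeasureTheory.Measure M → M) : 0 ≤ barDist β β' := by
  apply Real.sSup_nonneg
  rintro r ⟨n, x, hΔ, rfl⟩
  exact div_nonneg dist_nonneg Metric.diam_nonneg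

end BarHelpers

theorem stmt16 [MetricSpace M] [CompleteSpace M] [MeasurableSpace M] [BorelSpace M]
    (p : ℝ) (hp : 1 ≤ p)
    -- `interp x y t` is the point `x #_t y` on the geodesic from `x` to `y`
    (interp : M → M → ℝ → M)
    (hends : ∀ x y : M, interp x y 0 = x ∧ interp x y 1 = y)
    (hconv : ∀ x x' y y' : M, ∀ t ∈ Set.Icc (0 : ℝ) 1,
      dist (interp x y t) (interp x' y' t) ≤ (1 - t) * dist x x' + t * dist y y')
    (hgeo : ∀ x y : M, ∀ s ∈ Set.Icc (0 : ℝ) 1, ∀ t ∈ Set.Icc (0 : ℝ) 1,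
      dist (interp x y s) (interp x y t) = |s - t| * dist x y)
    (β₁ β₂ β₃ β₄ : MeasureTheory.Measure M → M)
    (h₁ : IsBarycentric p β₁) (h₂ : IsBarycentric p β₂)
    (h₃ : IsBarycentric p β₃) (h₄ : IsBarycentric p β₄)
    (t : ℝ) (ht : t ∈ Set.Icc (0 : ℝ) 1) :
    IsBarycentric p (fun μ => interp (β₁ μ) (β₂ μ) t) ∧
    barDist (fun μ => interp (β₁ μ) (β₂ μ) t) (fun μ => interp (β₃ μ) (β₄ μ) t)
      ≤ (1 - t) * barDist β₁ β₃ + t * barDist β₂ β₄ ∧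
    ∀ s ∈ Set.Icc (0 : ℝ) 1, ∀ u ∈ Set.Icc (0 : ℝ) 1,
      barDist (fun μ => interp (β₁ μ) (β₂ μ) s) (fun μ => interp (β₁ μ) (β₂ μ) u)
        = |s - u| * barDist β₁ β₂ := by
  obtain ⟨ht0, ht1⟩ := ht
  have hp0 : (0 : ℝ) ≤ p := le_trans zero_le_one hp
  -- `interp x x t = x`
  have hself : ∀ (x : M) (s : ℝ), s ∈ Set.Icc (0:ℝ) 1 → interp x x s = x := by
    intro x s hs
    have h0 : interp x x 0 = x := (hends x x).1
    have := hgeo x x 0 (by constructor <;> norm_num) s hs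
    rw [h0, dist_self, mul_zero] at this
    exact (dist_eq_zero.mp this).symm
  refine ⟨?_, ?_, ?_⟩
  · -- barycentricity
    constructor
    · intro x
      simp only [h₁.map_dirac, h₂.map_dirac]
      exact hself x t ⟨ht0, ht1⟩
    · intro μ ν hμ hν hμm hνm
      rcases eq_or_ne (wassDist p μ ν) ⊤ with hW | hW
      · rw [hW]; exact le_top
      · have e1 := h₁.contract μ ν hμ hν hμm hνm
        have e2 := h₂.contract μ ν hμ hν hμm hνm
        have d1 : dist (β₁ μ) (β₁ ν) ≤ (wassDist p μ ν).toReal := by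
          rw [dist_edist]; exact ENNReal.toReal_mono hW e1
        have d2 : dist (β₂ μ) (β₂ ν) ≤ (wassDist p μ ν).toReal := by
          rw [dist_edist]; exact ENNReal.toReal_mono hW e2
        have hd : dist (interp (β₁ μ) (β₂ μ) t) (interp (β₁ ν) (β₂ ν) t)
            ≤ (wassDist p μ ν).toReal := by
          calc dist (interp (β₁ μ) (β₂ μ) t) (interp (β₁ ν) (β₂ ν) t)
              ≤ (1 - t) * dist (β₁ μ) (β₁ ν) + t * dist (β₂ μ) (β₂ ν) :=
                hconv _ _ _ _ t ⟨ht0, ht1⟩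
            _ ≤ (1 - t) * (wassDist p μ ν).toReal + t * (wassDist p μ ν).toReal := by
                gcongr <;> linarith
            _ = (wassDist p μ ν).toReal := by ring
        calc edist (interp (β₁ μ) (β₂ μ) t) (interp (β₁ ν) (β₂ ν) t)
            = ENNReal.ofReal (dist (interp (β₁ μ) (β₂ μ) t) (interp (β₁ ν) (β₂ ν) t)) :=
              edist_dist _ _
          _ ≤ wassDist p μ ν := ENNReal.ofReal_le_of_le_toReal hd
  · -- convexity of barDist
    have B13 := barSet_bdd p hp h₁ h₃
    have B24 := barSet_bdd p hp h₂ h₄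
    apply Real.sSup_le
    · rintro r ⟨n, x, hΔ, rfl⟩
      have hΔpos : 0 < Metric.diam (Set.range x) :=
        lt_of_le_of_ne Metric.diam_nonneg (Ne.symm hΔ)
      have h13 : dist (β₁ (unifMeas x)) (β₃ (unifMeas x)) / Metric.diam (Set.range x)
          ≤ barDist β₁ β₃ := le_csSup B13 ⟨n, x, hΔ, rfl⟩
      have h24 : dist (β₂ (unifMeas x)) (β₄ (unifMeas x)) / Metric.diam (Set.range x)
          ≤ barDist β₂ β₄ := le_csSup B24 ⟨n, x, hΔ, rfl⟩
      calc dist (interp (β₁ (unifMeas x)) (β₂ (unifMeas x)) t)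
              (interp (β₃ (unifMeas x)) (β₄ (unifMeas x)) t) / Metric.diam (Set.range x)
          ≤ ((1 - t) * dist (β₁ (unifMeas x)) (β₃ (unifMeas x))
              + t * dist (β₂ (unifMeas x)) (β₄ (unifMeas x))) / Metric.diam (Set.range x) := by
            gcongr
            exact hconv _ _ _ _ t ⟨ht0, ht1⟩
        _ = (1 - t) * (dist (β₁ (unifMeas x)) (β₃ (unifMeas x)) / Metric.diam (Set.range x))
              + t * (dist (β₂ (unifMeas x)) (β₄ (unifMeas x)) / Metric.diam (Set.range x)) := by
            ring
        _ ≤ (1 - t) * barDist β₁ β₃ + t * barDist β₂ β₄ := by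
            gcongr <;> linarith
    · have := barDist_nonneg β₁ β₃
      have := barDist_nonneg β₂ β₄
      nlinarith
  · -- geodesic property
    intro s hs u hu
    have hset : {r : ℝ | ∃ n : ℕ, ∃ x : Fin (n + 1) → M, Metric.diam (Set.range x) ≠ 0 ∧
        r = dist ((fun μ => interp (β₁ μ) (β₂ μ) s) (unifMeas x))
            ((fun μ => interp (β₁ μ) (β₂ μ) u) (unifMeas x)) / Metric.diam (Set.range x)}
        = (fun r => |s - u| * r) ''
          {r : ℝ | ∃ n : ℕ, ∃ x : Fin (n + 1) → M, Metric.diam (Set.range x) ≠ 0 ∧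
            r = dist (β₁ (unifMeas x)) (β₂ (unifMeas x)) / Metric.diam (Set.range x)} := by
      ext r
      constructor
      · rintro ⟨n, x, hΔ, rfl⟩
        refine ⟨dist (β₁ (unifMeas x)) (β₂ (unifMeas x)) / Metric.diam (Set.range x),
          ⟨n, x, hΔ, rfl⟩, ?_⟩
        simp only
        rw [hgeo _ _ s hs u hu, mul_div_assoc]
      · rintro ⟨q, ⟨n, x, hΔ, rfl⟩, rfl⟩
        refine ⟨n, x, hΔ, ?_⟩
        simp only
        rw [hgeo _ _ s hs u hu, mul_div_assoc]
    rw [barDist, hset, real_sSup_image_mul _ (abs_nonneg _), barDist]
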